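/- arXiv:2503.10910 — 6 statements merged into one kernel-verified Lean document; each statement's English description precedes it below -/
import Mathlib

section
/- Let v : 2^N → ℝ, p a price vector, and W* a set maximizing v(Q) - Σ_{i∈Q} p_i. If p' satisfies p'_i ≤ p_i for i ∈ W* and p'_i ≥ p_i for i ∉ W*, then every set T maximizing v(Q) - Σ_{i∈Q} p'_i also maximizes v(Q) - Σ_{i∈Q} p_i; that is, the demand set at p' is contained in the demand set at p. -/
/-- If `W` maximizes the buyer's utility at prices `p`, and `p'` weakly lowers the
prices of winners and weakly raises the prices of losers, then every maximizer at `p'`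
is also a maximizer at `p`, i.e. `D(v;p') ⊆ D(v;p)`. -/
theorem demand_set_subset {N : Type*} [Fintype N] [DecidableEq N]
    (v : Finset N → ℝ) (p p' : N → ℝ) (W : Finset N)
    (hW : ∀ Q : Finset N, v Q - ∑ i ∈ Q, p i ≤ v W - ∑ i ∈ W, p i)
    (hwin : ∀ i ∈ W, p' i ≤ p i)
    (hlose : ∀ i, i ∉ W → p i ≤ p' i) :
    ∀ T : Finset N,
      (∀ Q : Finset N, v Q - ∑ i ∈ Q, p' i ≤ v T - ∑ i ∈ T, p' i) →
      (∀ Q : Finset N, v Q - ∑ i ∈ Q, p i ≤ v T - ∑ i ∈ T, p i) := by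
  intro T hT Q
  have key : ∑ i ∈ W, (p' i - p i) ≤ ∑ i ∈ T, (p' i - p i) := by
    have h1 : ∑ i ∈ W, (p' i - p i) ≤ ∑ i ∈ T ∩ W, (p' i - p i) := by
      have := Finset.sum_le_sum_of_subset_of_nonneg
        (f := fun i => -(p' i - p i)) (Finset.inter_subset_right (s₁ := T) (s₂ := W))
        (fun i hi _ => by show (0:ℝ) ≤ -(p' i - p i); have := hwin i hi; linarith)
      simp only [Finset.sum_neg_distrib] at this
      linarith
    have h2 : ∑ i ∈ T ∩ W, (p' i - p i) ≤ ∑ i ∈ T, (p' i - p i) := by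
      apply Finset.sum_le_sum_of_subset_of_nonneg (Finset.inter_subset_left)
      intro i hi hni
      have : i ∉ W := fun hiW => hni (Finset.mem_inter.mpr ⟨hi, hiW⟩)
      have := hlose i this
      linarith
    linarith
  have hTW := hT W
  have hQW := hW Q
  have e1 : ∑ i ∈ W, (p' i - p i) = (∑ i ∈ W, p' i) - ∑ i ∈ W, p i :=
    Finset.sum_sub_distrib _ _
  have e2 : ∑ i ∈ T, (p' i - p i) = (∑ i ∈ T, p' i) - ∑ i ∈ T, p i :=
    Finset.sum_sub_distrib _ _
  linarith
end

section
/- In the chopstick instance (two chopstick sellers with cost 10, one fork seller with cost 50, buyer value 100 for the fork or for both chopsticks, 0 otherwise), the bid profile where both chopstick sellers bid 95 and the fork seller bids 100 is a pure Nash equilibrium of the simultaneous first-price procurement game (the buyer buys a utility-maximizing set at the bid prices, tie-breaking in favor of the fork), yet the resulting allocation (buying the fork) is not welfare-maximizing. -/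
lemma finset_fin3_cases : ∀ R : Finset (Fin 3),
    R = ∅ ∨ R = {0} ∨ R = {1} ∨ R = {2} ∨ R = {0,1} ∨ R = {0,2} ∨ R = {1,2} ∨ R = {0,1,2} := by
  decide

/-- In the chopstick instance, the bid profile (95, 95, 100) is a pure Nash
equilibrium of the simultaneous first-price procurement game (for any buyer
choice rule that maximizes utility and tie-breaks in favor of sets containing the
fork), the buyer buys the fork, yet the resulting allocation is not
welfare-maximizing. -/
theorem chopstick_bad_equilibrium
    (choose : (Fin 3 → ℝ) → Finset (Fin 3))
    (cost : Fin 3 → ℝ) (hcost : cost = ![10, 10, 50])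
    (v : Finset (Fin 3) → ℝ)
    (hv : v = fun Q =>
      if (2 : Fin 3) ∈ Q ∨ ({0, 1} : Finset (Fin 3)) ⊆ Q then 100 else 0)
    -- the buyer always picks a utility-maximizing set at the bid prices
    (hmax : ∀ b : Fin 3 → ℝ, ∀ Q : Finset (Fin 3),
      v Q - ∑ i ∈ Q, b i ≤ v (choose b) - ∑ i ∈ choose b, b i)
    -- tie-breaking in favor of the fork: if some maximizing set contains the fork,
    -- the chosen set contains the fork
    (htie : ∀ b : Fin 3 → ℝ, ∀ Q : Finset (Fin 3), (2 : Fin 3) ∈ Q →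
      (∀ R : Finset (Fin 3), v R - ∑ i ∈ R, b i ≤ v Q - ∑ i ∈ Q, b i) →
      (2 : Fin 3) ∈ choose b)
    -- seller utilities
    (util : Fin 3 → (Fin 3 → ℝ) → ℝ)
    (hutil : util = fun i b => if i ∈ choose b then b i - cost i else 0) :
    let b0 : Fin 3 → ℝ := ![95, 95, 100]
    -- (1) Nash equilibrium: no unilateral deviation strictly helps
    (∀ i : Fin 3, ∀ bi : ℝ, util i (Function.update b0 i bi) ≤ util i b0) ∧
    -- (2) the buyer buys the fork
    choose b0 = {2} ∧
    -- (3) but this allocation is not welfare-maximizing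
    ¬ (∀ Q : Finset (Fin 3),
        v Q - ∑ i ∈ Q, cost i ≤ v (choose b0) - ∑ i ∈ choose b0, cost i) := by
  intro b0
  have hb0 : b0 = ![95, 95, 100] := rfl
  have hge0 : ∀ b : Fin 3 → ℝ, (0:ℝ) ≤ v (choose b) - ∑ i ∈ choose b, b i := by
    intro b
    simpa [hv] using hmax b ∅
  have h2 : (2 : Fin 3) ∈ choose b0 := by
    apply htie b0 {2} (by simp)
    intro R
    rcases finset_fin3_cases R with h|h|h|h|h|h|h|h <;> subst h <;>
      simp [hv, hb0, Finset.sum_insert, Finset.subset_iff] <;> norm_num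
  have hge := hge0 b0
  have hch : choose b0 = {2} := by
    rcases finset_fin3_cases (choose b0) with h|h|h|h|h|h|h|h
    · rw [h] at h2; simp at h2
    · rw [h] at h2; simp at h2
    · rw [h] at h2; simp at h2
    · exact h
    · rw [h] at h2; simp at h2
    · rw [h] at hge; simp [hv, hb0, Finset.sum_insert] at hge; linarith
    · rw [h] at hge; simp [hv, hb0, Finset.sum_insert] at hge; linarith
    · rw [h] at hge; simp [hv, hb0, Finset.sum_insert] at hge; linarith
  refine ⟨?_, hch, ?_⟩
  · have key0 : ∀ bi : ℝ, util 0 (Function.update b0 0 bi) ≤ util 0 b0 := by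
      intro bi
      simp only [hutil, hcost, hch]
      by_cases h0 : (0 : Fin 3) ∈ choose (Function.update b0 0 bi)
      · rw [if_pos h0, if_neg (by simp)]
        have hge' := hge0 (Function.update b0 0 bi)
        rw [hv] at hge'
        rcases finset_fin3_cases (choose (Function.update b0 0 bi)) with h|h|h|h|h|h|h|h <;>
          rw [h] at h0 hge' <;>
          simp [hb0, Finset.sum_insert, Finset.subset_iff, Function.update] at h0 hge' ⊢ <;>
          linarith
      · rw [if_neg h0, if_neg (by simp)]
    have key1 : ∀ bi : ℝ, util 1 (Function.update b0 1 bi) ≤ util 1 b0 := by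
      intro bi
      simp only [hutil, hcost, hch]
      by_cases h0 : (1 : Fin 3) ∈ choose (Function.update b0 1 bi)
      · rw [if_pos h0, if_neg (by simp)]
        have hge' := hge0 (Function.update b0 1 bi)
        rw [hv] at hge'
        rcases finset_fin3_cases (choose (Function.update b0 1 bi)) with h|h|h|h|h|h|h|h <;>
          rw [h] at h0 hge' <;>
          simp [hb0, Finset.sum_insert, Finset.subset_iff, Function.update] at h0 hge' ⊢ <;>
          linarith
      · rw [if_neg h0, if_neg (by simp)]
    have key2 : ∀ bi : ℝ, util 2 (Function.update b0 2 bi) ≤ util 2 b0 := by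
      intro bi
      simp only [hutil, hcost, hch]
      by_cases h0 : (2 : Fin 3) ∈ choose (Function.update b0 2 bi)
      · rw [if_pos h0, if_pos (by simp)]
        have hge' := hge0 (Function.update b0 2 bi)
        rw [hv] at hge'
        rcases finset_fin3_cases (choose (Function.update b0 2 bi)) with h|h|h|h|h|h|h|h <;>
          rw [h] at h0 hge' <;>
          simp [hb0, Finset.sum_insert, Finset.subset_iff, Function.update] at h0 hge' ⊢ <;>
          linarith
      · rw [if_neg h0, if_pos (by simp)]
        simp [hb0]
        norm_num
    intro i bi
    fin_cases i
    · exact key0 bi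
    · exact key1 bi
    · exact key2 bi
  · intro hall
    have := hall {0, 1}
    rw [hch] at this
    simp [hv, hcost, Finset.sum_insert, Finset.subset_iff] at this
    linarith
end

section
/- In the instance with n sellers of cost 0 and anonymous valuation v(Q) = |Q| for |Q| ≤ n-2, v(Q) = n-2 for |Q| = n-1, v(Q) = n-1 for |Q| = n: at the price vector where every seller's price is 1/2, the set of all sellers maximizes the buyer's utility v(Q) - Σ_{i∈Q} p_i, yielding buyer utility n/2 - 1. -/
/-- In the same instance, at uniform prices `1/2`, the set of all sellers
maximizes the buyer's utility `v(Q) - |Q|/2`, yielding buyer utility `n/2 - 1`. -/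
theorem all_sellers_demanded_at_half (n : ℕ) (hn : 3 ≤ n) :
    let v : Finset (Fin n) → ℝ := fun Q =>
      if Q.card = n then (n : ℝ) - 1 else min (Q.card : ℝ) ((n : ℝ) - 2)
    let p : Fin n → ℝ := fun _ => 1 / 2
    (∀ Q : Finset (Fin n),
        v Q - ∑ i ∈ Q, p i ≤ v Finset.univ - ∑ i ∈ Finset.univ, p i) ∧
      v Finset.univ - ∑ i ∈ (Finset.univ : Finset (Fin n)), p i
        = (n : ℝ) / 2 - 1 := by
  intro v p
  have hsum : ∀ Q : Finset (Fin n), ∑ i ∈ Q, p i = (Q.card : ℝ) / 2 := by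
    intro Q
    simp [p, Finset.sum_const, div_eq_mul_inv, mul_comm]
  have huniv : v Finset.univ - ∑ i ∈ (Finset.univ : Finset (Fin n)), p i
      = (n : ℝ) / 2 - 1 := by
    rw [hsum]
    simp only [v, Finset.card_univ, Fintype.card_fin, if_true, eq_self_iff_true]
    ring
  refine ⟨fun Q => ?_, huniv⟩
  rw [huniv, hsum]
  by_cases hQ : Q.card = n
  · simp only [v, if_pos hQ, hQ]; ring_nf; linarith
  · simp only [v, if_neg hQ]
    have hle : Q.card ≤ n := by
      simpa using Finset.card_le_card (Finset.subset_univ Q)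
    have hlt : Q.card < n := lt_of_le_of_ne hle hQ
    have hn3 : (3 : ℝ) ≤ (n : ℝ) := by exact_mod_cast hn
    by_cases hk : Q.card ≤ n - 2
    · have hk' : (Q.card : ℝ) ≤ (n : ℝ) - 2 := by
        have : (Q.card : ℝ) ≤ ((n - 2 : ℕ) : ℝ) := by exact_mod_cast hk
        have h2 : ((n - 2 : ℕ) : ℝ) = (n : ℝ) - 2 := by
          have : 2 ≤ n := by omega
          push_cast [this]; ring
        linarith
      rw [min_eq_left hk']
      have : (0 : ℝ) ≤ (Q.card : ℝ) := Nat.cast_nonneg _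
      linarith
    · have hk1 : Q.card = n - 1 := by omega
      have hk1' : (Q.card : ℝ) = (n : ℝ) - 1 := by
        rw [hk1]
        have : 1 ≤ n := by omega
        push_cast [this]; ring
      have hmin : min (Q.card : ℝ) ((n : ℝ) - 2) = (n : ℝ) - 2 := by
        rw [min_eq_right]; linarith
      rw [hmin, hk1']
      linarith
end

section
/- In the instance with n sellers of cost 0 and anonymous valuation v(Q) = |Q| for |Q| ≤ n-2, v(Q) = n-2 for |Q| = n-1, v(Q) = n-1 for |Q| = n: at the price vector where one seller has price 1 and all others have price 0, the set of all sellers maximizes the buyer's utility, giving total buyer payment 1. Hence two price vectors supporting the same efficient allocation can differ in total cost by a factor of n/2. -/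
/-- In the same instance, at the price vector where one seller has price 1 and all
others have price 0, the set of all sellers maximizes the buyer's utility and the
buyer's total payment is 1 (whereas at uniform prices 1/2 it is n/2): two price
vectors supporting the same efficient allocation whose total costs differ by a
factor of n/2. -/
theorem all_sellers_demanded_at_one (n : ℕ) (hn : 3 ≤ n) (j : Fin n) :
    let v : Finset (Fin n) → ℝ := fun Q =>
      if Q.card = n then (n : ℝ) - 1 else min (Q.card : ℝ) ((n : ℝ) - 2)
    let p : Fin n → ℝ := fun i => if i = j then 1 else 0
    (∀ Q : Finset (Fin n),
        v Q - ∑ i ∈ Q, p i ≤ v Finset.univ - ∑ i ∈ Finset.univ, p i) ∧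
      ∑ i ∈ (Finset.univ : Finset (Fin n)), p i = 1 ∧
      ∑ i ∈ (Finset.univ : Finset (Fin n)), (1 / 2 : ℝ) = (n : ℝ) / 2 := by
  intro v p
  have hsum : ∑ i ∈ (Finset.univ : Finset (Fin n)), p i = 1 := by
    simp [p, Finset.sum_ite_eq']
  have hvu : v Finset.univ = (n : ℝ) - 1 := by
    simp [v, Finset.card_univ]
  refine ⟨?_, hsum, by simp [Finset.sum_const, Finset.card_univ, mul_comm]; ring⟩
  intro Q
  rw [hvu, hsum]
  by_cases hQ : Q.card = n
  · have : Q = Finset.univ := Finset.eq_univ_of_card Q (by simp [hQ])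
    rw [this, hsum, hvu]
  · have h1 : v Q ≤ (n : ℝ) - 2 := by simp [v, hQ]
    have h2 : (0 : ℝ) ≤ ∑ i ∈ Q, p i :=
      Finset.sum_nonneg fun i _ => by simp [p]; split <;> norm_num
    linarith
end

section
/- Suppose v(Q) = g(|Q|) with g concave (decreasing marginals) and sellers ordered by cost c_1 ≤ ... ≤ c_n, and let k be the largest index with g(k) - g(k-1) ≥ c_k. If each of the first k sellers is paid the price p = g(k+1) - g(k) (with g(n+1) - g(n) interpreted appropriately if k = n), then the set {1,...,k} maximizes the buyer's utility v(Q) - Σ_{i∈Q} p_i when all sellers i ≤ k have price g(k+1) - g(k) and all sellers i > k have price c_i, provided g(k+1) - g(k) < c_{k+1}. -/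
private lemma marg_anti (g : ℕ → ℝ)
    (hconc : ∀ m : ℕ, g (m + 2) - g (m + 1) ≤ g (m + 1) - g m) :
    ∀ a b : ℕ, a ≤ b → g (b + 1) - g b ≤ g (a + 1) - g a := by
  intro a b hab
  induction b with
  | zero => simp_all
  | succ b ih =>
    rcases Nat.lt_or_ge a (b+1) with h | h
    · exact le_trans (hconc b) (ih (Nat.lt_succ_iff.mp h))
    · have : a = b + 1 := le_antisymm hab h
      subst this; rfl

private lemma key_ineq (g : ℕ → ℝ)
    (hconc : ∀ m : ℕ, g (m + 2) - g (m + 1) ≤ g (m + 1) - g m)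
    (k : ℕ) :
    ∀ m : ℕ, g m - (m : ℝ) * (g (k+1) - g k) ≤ g k - (k : ℝ) * (g (k+1) - g k) := by
  set p : ℝ := g (k+1) - g k with hp
  intro m
  rcases le_or_gt m k with hmk | hkm
  · -- prove ∀ j, m ≤ j → j ≤ k → ...
    have main : ∀ j : ℕ, m ≤ j → j ≤ k → g m - (m:ℝ)*p ≤ g j - (j:ℝ)*p := by
      intro j
      induction j with
      | zero => intro h1 _; interval_cases m; simp
      | succ j ih =>
        intro h1 h2
        rcases Nat.lt_or_ge m (j+1) with h | h
        · have hmj : m ≤ j := Nat.lt_succ_iff.mp h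
          have := ih hmj (le_trans (Nat.le_succ j) h2)
          have hmarg : p ≤ g (j+1) - g j := marg_anti g hconc j k (Nat.le_of_succ_le h2)
          push_cast
          nlinarith
        · have : m = j + 1 := le_antisymm h1 h
          subst this; rfl
    exact main k hmk le_rfl
  · have main : ∀ j : ℕ, k ≤ j → g j - (j:ℝ)*p ≤ g k - (k:ℝ)*p := by
      intro j hj
      induction j, hj using Nat.le_induction with
      | base => rfl
      | succ j hj ih =>
        have hmarg : g (j+1) - g j ≤ p := marg_anti g hconc k j hj
        push_cast
        nlinarith
    exact main m hkm.le

/-- With a concave anonymous valuation and sorted costs, if the first `k` sellers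
are each priced at `g(k+1) - g(k)` and all other sellers are priced at their
costs (and `g(k+1) - g(k) < c_{k+1}`), then the prefix `{1,…,k}` maximizes the
buyer's utility at these prices. -/
theorem concave_threshold_prices (n : ℕ) (g : ℕ → ℝ) (c : Fin n → ℝ)
    (hg0 : g 0 = 0)
    (hconc : ∀ m : ℕ, g (m + 2) - g (m + 1) ≤ g (m + 1) - g m)
    (hsorted : ∀ i j : Fin n, i ≤ j → c i ≤ c j)
    (k : ℕ) (hkn : k < n)
    (hin : ∀ i : Fin n, (i : ℕ) < k → c i ≤ g ((i : ℕ) + 1) - g (i : ℕ))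
    (hout : ∀ i : Fin n, k ≤ (i : ℕ) → g ((i : ℕ) + 1) - g (i : ℕ) < c i)
    (hstrict : g (k + 1) - g k < c ⟨k, hkn⟩) :
    let p : Fin n → ℝ := fun i => if (i : ℕ) < k then g (k + 1) - g k else c i
    let W : Finset (Fin n) := Finset.univ.filter (fun i => (i : ℕ) < k)
    ∀ Q : Finset (Fin n),
      g Q.card - ∑ i ∈ Q, p i ≤ g W.card - ∑ i ∈ W, p i := by
  intro p W Q
  set pr : ℝ := g (k+1) - g k with hpr
  -- each price is ≥ pr
  have hge : ∀ i : Fin n, pr ≤ p i := by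
    intro i
    by_cases h : (i : ℕ) < k
    · simp [p, h, hpr]
    · have hk : (⟨k, hkn⟩ : Fin n) ≤ i := by
        simpa [Fin.le_def] using Nat.le_of_not_lt h
      have := hsorted _ _ hk
      simp only [p, if_neg h]
      linarith [hstrict]
  -- W facts
  have hWcard : W.card = k := by
    have himg : W = Finset.image (Fin.castLE hkn.le) Finset.univ := by
      ext i
      simp only [W, Finset.mem_filter, Finset.mem_univ, true_and, Finset.mem_image]
      constructor
      · intro h; exact ⟨⟨i, h⟩, rfl⟩
      · rintro ⟨j, rfl⟩; exact j.isLt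
    rw [himg, Finset.card_image_of_injective _ (Fin.castLE_injective _),
      Finset.card_univ, Fintype.card_fin]
  have hWsum : ∑ i ∈ W, p i = (k : ℝ) * pr := by
    rw [Finset.sum_congr rfl (fun i hi => ?_), Finset.sum_const, hWcard,
      nsmul_eq_mul]
    have : (i : ℕ) < k := (Finset.mem_filter.mp hi).2
    simp [p, this, hpr]
  have hQsum : (Q.card : ℝ) * pr ≤ ∑ i ∈ Q, p i := by
    calc (Q.card : ℝ) * pr = ∑ _i ∈ Q, pr := by rw [Finset.sum_const, nsmul_eq_mul]
    _ ≤ ∑ i ∈ Q, p i := Finset.sum_le_sum fun i _ => hge i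
  have hkey := key_ineq g hconc k Q.card
  rw [hWcard, hWsum]
  calc g Q.card - ∑ i ∈ Q, p i ≤ g Q.card - (Q.card : ℝ) * pr := by linarith
    _ ≤ g k - (k : ℝ) * pr := hkey
end

section
/- Let v be any valuation and c the cost vector. If W maximizes v(Q) - Σ_{i∈Q} p_i at a price vector p with p_i ≥ c_i for all i ∈ W and p_i ≤ c_i for all i ∉ W, then W maximizes social welfare v(Q) - Σ_{i∈Q} c_i over all Q ⊆ N. -/
/-- Key structural fact behind the efficiency of BAFO auctions: if `W` maximizes
the buyer's utility at prices `p` with `p_i ≥ c_i` for winners and `p_i ≤ c_i`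
for losers, then `W` maximizes social welfare at true costs. -/
theorem winner_maximizes_welfare {N : Type*} [Fintype N] [DecidableEq N]
    (v : Finset N → ℝ) (c p : N → ℝ) (W : Finset N)
    (hW : ∀ Q : Finset N, v Q - ∑ i ∈ Q, p i ≤ v W - ∑ i ∈ W, p i)
    (hwin : ∀ i ∈ W, c i ≤ p i)
    (hlose : ∀ i, i ∉ W → p i ≤ c i) :
    ∀ Q : Finset N, v Q - ∑ i ∈ Q, c i ≤ v W - ∑ i ∈ W, c i := by
  intro Q
  have key : ∑ i ∈ Q, (p i - c i) ≤ ∑ i ∈ W, (p i - c i) := by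
    calc ∑ i ∈ Q, (p i - c i) ≤ ∑ i ∈ Q ∩ W, (p i - c i) := by
          rw [← Finset.sum_inter_add_sum_sdiff Q W fun i => p i - c i]
          have : ∑ i ∈ Q \ W, (p i - c i) ≤ 0 := by
            apply Finset.sum_nonpos
            intro i hi
            have := hlose i (Finset.mem_sdiff.mp hi).2
            linarith
          linarith
      _ ≤ ∑ i ∈ W, (p i - c i) := by
          apply Finset.sum_le_sum_of_subset_of_nonneg (Finset.inter_subset_right)
          intro i hi _
          have := hwin i hi
          linarith
  have h := hW Q
  have e1 : ∑ i ∈ Q, (p i - c i) = ∑ i ∈ Q, p i - ∑ i ∈ Q, c i := Finset.sum_sub_distrib _ _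
  have e2 : ∑ i ∈ W, (p i - c i) = ∑ i ∈ W, p i - ∑ i ∈ W, c i := Finset.sum_sub_distrib _ _
  linarith
end
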